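/- If a finitely presented group G = ⟨x₁,…,xₙ | R₁,…,Rₘ⟩ has solvable word problem, then the Mihailova subgroup A = {(x,y) ∈ Fₙ × Fₙ : x =_G y} is finitely generated by the elements (1, R₁),…,(1, Rₘ), (x₁, x₁),…,(xₙ, xₙ). -/

import Mathlib

/-- Mihailova's finite generation: If the finitely presented group
`G = ⟨x₁,…,xₙ | R₁,…,Rₘ⟩` has solvable word problem, then the Mihailova subgroup
`A = {(x,y) ∈ Fₙ × Fₙ : x =_G y}` is generated by the finitely many elements
`(1,R₁),…,(1,Rₘ),(x₁,x₁),…,(xₙ,xₙ)`. -/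
theorem stmt5 (n m : ℕ) (R : Fin m → FreeGroup (Fin n))
    -- G has solvable word problem:
    (hWP : Nonempty (DecidablePred fun w : FreeGroup (Fin n) =>
        PresentedGroup.mk (Set.range R) w = 1)) :
    (Subgroup.closure
        ((Set.range fun j : Fin m => ((1 : FreeGroup (Fin n)), R j)) ∪
         (Set.range fun i : Fin n => (FreeGroup.of i, FreeGroup.of i))) :
      Set (FreeGroup (Fin n) × FreeGroup (Fin n))) =
    {p : FreeGroup (Fin n) × FreeGroup (Fin n) |
        PresentedGroup.mk (Set.range R) p.1 = PresentedGroup.mk (Set.range R) p.2} := by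
  classical
  set π := PresentedGroup.mk (Set.range R) with hπ
  set S := Subgroup.closure
      ((Set.range fun j : Fin m => ((1 : FreeGroup (Fin n)), R j)) ∪
       (Set.range fun i : Fin n => (FreeGroup.of i, FreeGroup.of i))) with hS
  -- π w = 1 ↔ w ∈ normalClosure (range R)
  have hker : ∀ w : FreeGroup (Fin n),
      π w = 1 ↔ w ∈ Subgroup.normalClosure (Set.range R) := by
    intro w
    exact QuotientGroup.eq_one_iff w
  -- diagonal elements are in S
  have hdiag : ∀ g : FreeGroup (Fin n), (g, g) ∈ S := by
    intro g
    have hg : g ∈ Subgroup.closure (Set.range (FreeGroup.of : Fin n → FreeGroup (Fin n))) := by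
      rw [FreeGroup.closure_range_of]; trivial
    refine Subgroup.closure_induction
      (fun x hx => ?_) ?_ (fun x y _ _ hx hy => ?_) (fun x _ hx => ?_) hg
    · obtain ⟨i, rfl⟩ := hx
      exact Subgroup.subset_closure (Or.inr ⟨i, rfl⟩)
    · exact one_mem S
    · simpa using mul_mem hx hy
    · simpa using inv_mem hx
  -- the set T = {w | (1,w) ∈ S} is a normal subgroup containing range R
  have hT : ∀ w ∈ Subgroup.normalClosure (Set.range R),
      ((1 : FreeGroup (Fin n)), w) ∈ S := by
    set T : Subgroup (FreeGroup (Fin n)) :=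
      S.comap (MonoidHom.inr (FreeGroup (Fin n)) (FreeGroup (Fin n))) with hTdef
    have hTnormal : T.Normal := by
      constructor
      intro w hw g
      have : (g * 1 * g⁻¹, g * w * g⁻¹) ∈ S := by
        have := mul_mem (mul_mem (hdiag g) hw) (inv_mem (hdiag g))
        simpa using this
      rw [mul_one, mul_inv_cancel] at this
      exact this
    have hle : Subgroup.normalClosure (Set.range R) ≤ T := by
      refine Subgroup.normalClosure_le_normal ?_
      rintro w ⟨j, rfl⟩
      exact Subgroup.subset_closure (Or.inl ⟨j, rfl⟩)
    intro w hw
    exact hle hw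
  apply Set.Subset.antisymm
  · -- closure ⊆ A
    intro p hp
    have hp' : p ∈ S := hp
    refine Subgroup.closure_induction (fun x hx => ?_) ?_
      (fun x y _ _ hx hy => ?_) (fun x _ hx => ?_) hp'
    · rcases hx with ⟨j, rfl⟩ | ⟨i, rfl⟩
      · show π 1 = π (R j)
        rw [map_one]
        exact ((hker (R j)).mpr
          (Subgroup.subset_normalClosure ⟨j, rfl⟩)).symm
      · rfl
    · rfl
    · show π (x.1 * y.1) = π (x.2 * y.2)
      rw [map_mul, map_mul, hx, hy]
    · show π x.1⁻¹ = π x.2⁻¹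
      rw [map_inv, map_inv, hx]
  · -- A ⊆ closure
    rintro ⟨x, y⟩ hxy
    have h1 : π (x⁻¹ * y) = 1 := by
      have : π x = π y := hxy
      rw [map_mul, map_inv, this, inv_mul_cancel]
    have h2 : ((1 : FreeGroup (Fin n)), x⁻¹ * y) ∈ S :=
      hT _ ((hker _).mp h1)
    have h3 := mul_mem (hdiag x) h2
    simpa using h3
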